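/- Let (Ω, ℱ, P) be a probability space, let (𝒲, 𝒜) be a measurable space, let W : Ω → 𝒲 be measurable, let A : Ω → {0, 1} ⊂ ℝ be a random variable, and let Y : Ω → ℝ be bounded measurable. Let g₀ : 𝒲 → ℝ be measurable with δ ≤ g₀(w) ≤ 1 − δ for some δ ∈ (0, 1/2) and E[A ∣ σ(W)] = g₀(W) almost surely, and let Q̄₀ : {0,1} × 𝒲 → ℝ be bounded measurable with E[Y ∣ σ(A, W)] = Q̄₀(A, W) almost surely. Then for EVERY bounded measurable Q̄ : {0,1} × 𝒲 → ℝ (not necessarily equal to Q̄₀), E[ (A/g₀(W))·(Y − Q̄(1, W)) − ((1 − A)/(1 − g₀(W)))·(Y − Q̄(0, W)) + Q̄(1, W) − Q̄(0, W) ] = E[ Q̄₀(1, W) − Q̄₀(0, W) ]. -/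

import Mathlib

open MeasureTheory

private lemma bdd_integrable {Ω : Type*} {mΩ : MeasurableSpace Ω} (P : Measure Ω)
    [IsProbabilityMeasure P] {f : Ω → ℝ} (hf : Measurable[mΩ] f) (C : ℝ)
    (hb : ∀ ω, |f ω| ≤ C) : Integrable f P :=
  Integrable.mono' (integrable_const C) hf.aestronglyMeasurable (ae_of_all _ hb)

/-- key pull-out/tower step: ∫ f·g = ∫ f·h when E[g|m] = h a.e., f m-measurable bounded. -/
private lemma key_step {Ω : Type*} {mΩ : MeasurableSpace Ω} (P : Measure Ω)
    [IsProbabilityMeasure P] {m : MeasurableSpace Ω} (hm : m ≤ mΩ)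
    {f g h : Ω → ℝ} (hf : Measurable[m] f) (Cf : ℝ) (hfb : ∀ ω, |f ω| ≤ Cf)
    (hg : Measurable[mΩ] g) (Cg : ℝ) (hgb : ∀ ω, |g ω| ≤ Cg)
    (hcond : P[g | m] =ᵐ[P] h) :
    ∫ ω, f ω * g ω ∂P = ∫ ω, f ω * h ω ∂P := by
  have hgi : Integrable g P := bdd_integrable P hg Cg hgb
  have hfm : Measurable[mΩ] f := hf.mono hm le_rfl
  have hfgmeas : Measurable[mΩ] (f * g) := hfm.mul hg
  have hfgi : Integrable (f * g) P := by
    refine bdd_integrable P hfgmeas (Cf * Cg) (fun ω => ?_)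
    rw [Pi.mul_apply, abs_mul]
    exact mul_le_mul (hfb ω) (hgb ω) (abs_nonneg _) ((abs_nonneg _).trans (hfb ω))
  have h1 : P[f * g | m] =ᵐ[P] fun ω => f ω * h ω :=
    (condExp_mul_of_stronglyMeasurable_left hf.stronglyMeasurable hfgi hgi).trans
      (hcond.mono fun ω hω => by simp [hω])
  calc ∫ ω, f ω * g ω ∂P = ∫ ω, (P[f * g | m]) ω ∂P := (integral_condExp hm).symm
    _ = ∫ ω, f ω * h ω ∂P := integral_congr_ae h1

theorem aipw_exactly_unbiased_known_propensity
    {Ω : Type*} [MeasurableSpace Ω] (P : Measure Ω) [IsProbabilityMeasure P]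
    {𝒲 : Type*} [m𝒲 : MeasurableSpace 𝒲]
    (W : Ω → 𝒲) (hW : Measurable W)
    (A : Ω → ℝ) (hA : Measurable A) (hA01 : ∀ ω, A ω = 0 ∨ A ω = 1)
    (Y : Ω → ℝ) (hYmeas : Measurable Y) (CY : ℝ) (hYbdd : ∀ ω, |Y ω| ≤ CY)
    (g₀ : 𝒲 → ℝ) (hg₀ : Measurable g₀)
    (δ : ℝ) (hδ0 : 0 < δ) (hδhalf : δ < 1 / 2)
    (hg₀b : ∀ w, δ ≤ g₀ w ∧ g₀ w ≤ 1 - δ)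
    (hrand : P[A | MeasurableSpace.comap W m𝒲] =ᵐ[P] fun ω => g₀ (W ω))
    (Q₀ : ℝ → 𝒲 → ℝ) (hQ₀meas : ∀ a, Measurable (Q₀ a))
    (C₀ : ℝ) (hQ₀bdd : ∀ a w, |Q₀ a w| ≤ C₀)
    (hQ₀ : P[Y | MeasurableSpace.comap A Real.measurableSpace ⊔
        MeasurableSpace.comap W m𝒲]
      =ᵐ[P] fun ω => Q₀ (A ω) (W ω)) :
    ∀ (Q : ℝ → 𝒲 → ℝ), (∀ a, Measurable (Q a)) → ∀ C : ℝ, (∀ a w, |Q a w| ≤ C) →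
      ∫ ω, (A ω / g₀ (W ω) * (Y ω - Q 1 (W ω))
          - (1 - A ω) / (1 - g₀ (W ω)) * (Y ω - Q 0 (W ω))
          + Q 1 (W ω) - Q 0 (W ω)) ∂P
        = ∫ ω, (Q₀ 1 (W ω) - Q₀ 0 (W ω)) ∂P := by
  intro Q hQmeas C hQbdd
  -- numerics and bounds
  have hg₀pos : ∀ w, 0 < g₀ w := fun w => lt_of_lt_of_le hδ0 (hg₀b w).1
  have h1g₀pos : ∀ w, δ ≤ 1 - g₀ w := fun w => by linarith [(hg₀b w).2]
  have hAabs : ∀ ω, |A ω| ≤ 1 := fun ω => by rcases hA01 ω with h | h <;> simp [h]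
  have h1Aabs : ∀ ω, |1 - A ω| ≤ 1 := fun ω => by rcases hA01 ω with h | h <;> simp [h]
  have habsdiv : ∀ (a b Ca : ℝ), |a| ≤ Ca → δ ≤ b → |a / b| ≤ Ca / δ := by
    intro a b Ca ha hb
    rw [abs_div, abs_of_pos (lt_of_lt_of_le hδ0 hb)]
    exact div_le_div₀ ((abs_nonneg a).trans ha) ha hδ0 hb
  set f₁ : Ω → ℝ := fun ω => A ω / g₀ (W ω) with hf₁def
  set f₀ : Ω → ℝ := fun ω => (1 - A ω) / (1 - g₀ (W ω)) with hf₀def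
  have hf₁b : ∀ ω, |f₁ ω| ≤ 1 / δ := fun ω => habsdiv _ _ _ (hAabs ω) (hg₀b (W ω)).1
  have hf₀b : ∀ ω, |f₀ ω| ≤ 1 / δ := fun ω => habsdiv _ _ _ (h1Aabs ω) (h1g₀pos (W ω))
  -- ambient measurability (before introducing sub-σ-algebras)
  have hg₀W : Measurable fun ω => g₀ (W ω) := hg₀.comp hW
  have hf₁meas : Measurable f₁ := hA.div hg₀W
  have hf₀meas : Measurable f₀ := (measurable_const.sub hA).div (measurable_const.sub hg₀W)
  have h1Ameas : Measurable fun ω => 1 - A ω := measurable_const.sub hA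
  -- integrability of the pieces
  have mulbd : ∀ {u v : Ω → ℝ} (Cu Cv : ℝ), Measurable u → Measurable v →
      (∀ ω, |u ω| ≤ Cu) → (∀ ω, |v ω| ≤ Cv) → Integrable (fun ω => u ω * v ω) P := by
    intro u v Cu Cv hu hv hub hvb
    refine bdd_integrable P (hu.mul hv) (Cu * Cv) (fun ω => ?_)
    rw [abs_mul]
    exact mul_le_mul (hub ω) (hvb ω) (abs_nonneg _) ((abs_nonneg _).trans (hub ω))
  have i1 : Integrable (fun ω => f₁ ω * Y ω) P :=
    mulbd (1/δ) CY hf₁meas hYmeas hf₁b hYbdd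
  have i2 : Integrable (fun ω => f₁ ω * Q 1 (W ω)) P :=
    mulbd (1/δ) C hf₁meas ((hQmeas 1).comp hW) hf₁b (fun ω => hQbdd 1 (W ω))
  have i3 : Integrable (fun ω => f₀ ω * Y ω) P :=
    mulbd (1/δ) CY hf₀meas hYmeas hf₀b hYbdd
  have i4 : Integrable (fun ω => f₀ ω * Q 0 (W ω)) P :=
    mulbd (1/δ) C hf₀meas ((hQmeas 0).comp hW) hf₀b (fun ω => hQbdd 0 (W ω))
  have i5 : Integrable (fun ω => Q 1 (W ω)) P :=
    bdd_integrable P ((hQmeas 1).comp hW) C (fun ω => hQbdd 1 (W ω))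
  have i6 : Integrable (fun ω => Q 0 (W ω)) P :=
    bdd_integrable P ((hQmeas 0).comp hW) C (fun ω => hQbdd 0 (W ω))
  have i7 : Integrable (fun ω => Q₀ 1 (W ω)) P :=
    bdd_integrable P ((hQ₀meas 1).comp hW) C₀ (fun ω => hQ₀bdd 1 (W ω))
  have i8 : Integrable (fun ω => Q₀ 0 (W ω)) P :=
    bdd_integrable P ((hQ₀meas 0).comp hW) C₀ (fun ω => hQ₀bdd 0 (W ω))
  have hintA : Integrable A P := bdd_integrable P hA 1 hAabs
  -- sub-σ-algebras
  have hmWle := hW.comap_le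
  have hmAWle : MeasurableSpace.comap A Real.measurableSpace ⊔
      MeasurableSpace.comap W m𝒲 ≤ ‹MeasurableSpace Ω› := sup_le hA.comap_le hW.comap_le
  set mW : MeasurableSpace Ω := MeasurableSpace.comap W m𝒲 with hmW
  set mAW : MeasurableSpace Ω :=
    MeasurableSpace.comap A Real.measurableSpace ⊔ mW with hmAW
  have hWm : Measurable[mW] W := Measurable.of_comap_le le_rfl
  have hAm : Measurable[mAW] A :=
    (Measurable.of_comap_le le_rfl :
      Measurable[MeasurableSpace.comap A Real.measurableSpace] A).mono le_sup_left le_rfl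
  have hcompW : ∀ {φ : 𝒲 → ℝ}, Measurable φ → Measurable[mW] fun ω => φ (W ω) :=
    fun hφ => hφ.comp hWm
  have hf₁m : Measurable[mAW] f₁ := hAm.div ((hcompW hg₀).mono le_sup_right le_rfl)
  have hf₀m : Measurable[mAW] f₀ :=
    (measurable_const.sub hAm).div
      ((hcompW (measurable_const.sub hg₀)).mono le_sup_right le_rfl)
  -- conditional expectation of Y given (A, W), rewritten measurably
  have hQ₀' : P[Y | mAW] =ᵐ[P]
      fun ω => A ω * Q₀ 1 (W ω) + (1 - A ω) * Q₀ 0 (W ω) := by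
    refine hQ₀.trans (ae_of_all _ fun ω => ?_)
    rcases hA01 ω with h | h <;> simp [h]
  -- conditional expectation of 1 - A given W
  have hrand' : P[(fun ω => 1 - A ω) | mW] =ᵐ[P] fun ω => 1 - g₀ (W ω) := by
    have hsub : P[(fun _ => (1:ℝ)) - A | mW] =ᵐ[P]
        P[(fun _ => (1:ℝ)) | mW] - P[A | mW] :=
      condExp_sub (integrable_const 1) hintA mW
    have hc : P[(fun _ : Ω => (1:ℝ)) | mW] = fun _ => (1:ℝ) := condExp_const (μ := P) hmWle (1:ℝ)
    refine Filter.EventuallyEq.trans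
      (by rw [show (fun ω => 1 - A ω) = (fun _ => (1:ℝ)) - A from rfl]) ?_
    refine hsub.trans ?_
    rw [hc]
    filter_upwards [hrand] with ω hω
    simp [hω]
  -- H1 : ∫ f₁ Y = ∫ Q₀ 1 W
  have H1 : ∫ ω, f₁ ω * Y ω ∂P = ∫ ω, Q₀ 1 (W ω) ∂P := by
    rw [key_step P hmAWle hf₁m (1/δ) hf₁b hYmeas CY hYbdd hQ₀']
    have s2 : ∫ ω, f₁ ω * (A ω * Q₀ 1 (W ω) + (1 - A ω) * Q₀ 0 (W ω)) ∂P
        = ∫ ω, (Q₀ 1 (W ω) / g₀ (W ω)) * A ω ∂P := by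
      refine integral_congr_ae (ae_of_all _ fun ω => ?_)
      rcases hA01 ω with h | h <;> simp [hf₁def, h] <;> ring
    rw [s2, key_step P hmWle (hcompW (φ := fun w => Q₀ 1 w / g₀ w) ((hQ₀meas 1).div hg₀)) (C₀/δ)
      (fun ω => habsdiv _ _ _ (hQ₀bdd 1 (W ω)) (hg₀b (W ω)).1) hA 1 hAabs hrand]
    refine integral_congr_ae (ae_of_all _ fun ω => ?_)
    exact div_mul_cancel₀ _ (ne_of_gt (hg₀pos (W ω)))
  -- H2 : ∫ f₁ Q1 = ∫ Q1
  have H2 : ∫ ω, f₁ ω * Q 1 (W ω) ∂P = ∫ ω, Q 1 (W ω) ∂P := by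
    have s2 : ∫ ω, f₁ ω * Q 1 (W ω) ∂P
        = ∫ ω, (Q 1 (W ω) / g₀ (W ω)) * A ω ∂P := by
      refine integral_congr_ae (ae_of_all _ fun ω => ?_)
      simp only [hf₁def]; ring
    rw [s2, key_step P hmWle (hcompW (φ := fun w => Q 1 w / g₀ w) ((hQmeas 1).div hg₀)) (C/δ)
      (fun ω => habsdiv _ _ _ (hQbdd 1 (W ω)) (hg₀b (W ω)).1) hA 1 hAabs hrand]
    refine integral_congr_ae (ae_of_all _ fun ω => ?_)
    exact div_mul_cancel₀ _ (ne_of_gt (hg₀pos (W ω)))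
  -- H3 : ∫ f₀ Y = ∫ Q₀ 0 W
  have H3 : ∫ ω, f₀ ω * Y ω ∂P = ∫ ω, Q₀ 0 (W ω) ∂P := by
    rw [key_step P hmAWle hf₀m (1/δ) hf₀b hYmeas CY hYbdd hQ₀']
    have s2 : ∫ ω, f₀ ω * (A ω * Q₀ 1 (W ω) + (1 - A ω) * Q₀ 0 (W ω)) ∂P
        = ∫ ω, (Q₀ 0 (W ω) / (1 - g₀ (W ω))) * (1 - A ω) ∂P := by
      refine integral_congr_ae (ae_of_all _ fun ω => ?_)
      rcases hA01 ω with h | h <;> simp [hf₀def, h] <;> ring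
    rw [s2, key_step P hmWle (hcompW (φ := fun w => Q₀ 0 w / (1 - g₀ w)) ((hQ₀meas 0).div (measurable_const.sub hg₀))) (C₀/δ)
      (fun ω => habsdiv _ _ _ (hQ₀bdd 0 (W ω)) (h1g₀pos (W ω))) h1Ameas 1 h1Aabs hrand']
    refine integral_congr_ae (ae_of_all _ fun ω => ?_)
    exact div_mul_cancel₀ _ (ne_of_gt (lt_of_lt_of_le hδ0 (h1g₀pos (W ω))))
  -- H4 : ∫ f₀ Q0 = ∫ Q0
  have H4 : ∫ ω, f₀ ω * Q 0 (W ω) ∂P = ∫ ω, Q 0 (W ω) ∂P := by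
    have s2 : ∫ ω, f₀ ω * Q 0 (W ω) ∂P
        = ∫ ω, (Q 0 (W ω) / (1 - g₀ (W ω))) * (1 - A ω) ∂P := by
      refine integral_congr_ae (ae_of_all _ fun ω => ?_)
      simp only [hf₀def]; ring
    rw [s2, key_step P hmWle (hcompW (φ := fun w => Q 0 w / (1 - g₀ w)) ((hQmeas 0).div (measurable_const.sub hg₀))) (C/δ)
      (fun ω => habsdiv _ _ _ (hQbdd 0 (W ω)) (h1g₀pos (W ω))) h1Ameas 1 h1Aabs hrand']
    refine integral_congr_ae (ae_of_all _ fun ω => ?_)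
    exact div_mul_cancel₀ _ (ne_of_gt (lt_of_lt_of_le hδ0 (h1g₀pos (W ω))))
  -- put everything together
  have i12 : Integrable (fun ω => f₁ ω * Y ω - f₁ ω * Q 1 (W ω)) P := i1.sub i2
  have i34 : Integrable (fun ω => f₀ ω * Y ω - f₀ ω * Q 0 (W ω)) P := i3.sub i4
  have i56 : Integrable (fun ω => Q 1 (W ω) - Q 0 (W ω)) P := i5.sub i6
  have i1234 : Integrable (fun ω => (f₁ ω * Y ω - f₁ ω * Q 1 (W ω))
      - (f₀ ω * Y ω - f₀ ω * Q 0 (W ω))) P := i12.sub i34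
  have split : ∫ ω, (A ω / g₀ (W ω) * (Y ω - Q 1 (W ω))
          - (1 - A ω) / (1 - g₀ (W ω)) * (Y ω - Q 0 (W ω))
          + Q 1 (W ω) - Q 0 (W ω)) ∂P
      = ∫ ω, ((f₁ ω * Y ω - f₁ ω * Q 1 (W ω)) - (f₀ ω * Y ω - f₀ ω * Q 0 (W ω))
          + (Q 1 (W ω) - Q 0 (W ω))) ∂P := by
    refine integral_congr_ae (ae_of_all _ fun ω => ?_)
    simp only [hf₁def, hf₀def]
    ring
  rw [split, integral_add i1234 i56, integral_sub i12 i34, integral_sub i1 i2,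
    integral_sub i3 i4, integral_sub i5 i6, H1, H2, H3, H4, integral_sub i7 i8]
  ring
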